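/- Let M be a closed oriented n-manifold and f : M → M an L-Lipschitz map of degree d > 0. If for some k with 1 ≤ k ≤ n−1 the induced map f* : H^k(M;ℂ) → H^k(M;ℂ) has an eigenvalue λ with |λ| ≠ d^{k/n}, then L ≥ d^{1/n}·c for some c > 1 depending on |λ|·d^{-k/n}; more precisely either L ≥ |λ|^{1/k} > d^{1/n}, or (by Poincaré duality) f* on H^{n−k}(M;ℂ) has an eigenvalue μ with |μ| = d/|λ| > d^{(n−k)/n}, so L ≥ |μ|^{1/(n−k)} > d^{1/n}. -/

import Mathlib

/-- If a linear endomorphism has operator-norm bound `C`, any eigenvalue has `|λ| ≤ C`. -/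
lemma eig_abs_le {V : Type*} [NormedAddCommGroup V] [NormedSpace ℂ V]
    (T : V →ₗ[ℂ] V) {C : ℝ} (hT : ∀ u : V, ‖T u‖ ≤ C * ‖u‖)
    {lam : ℂ} (h : Module.End.HasEigenvalue T lam) : ‖lam‖ ≤ C := by
  obtain ⟨v, hv⟩ := h.exists_hasEigenvector
  have hv0 : ‖v‖ ≠ 0 := norm_ne_zero_iff.mpr hv.right
  have h1 : ‖T v‖ = ‖lam‖ * ‖v‖ := by
    rw [hv.apply_eq_smul, norm_smul]
  have := hT v
  rw [h1] at this
  exact le_of_mul_le_mul_right this (lt_of_le_of_ne (norm_nonneg v) (Ne.symm hv0))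

lemma pow_rpow_inv_nat {x : ℝ} (hx : 0 ≤ x) {m : ℕ} (hm : m ≠ 0) :
    (x ^ m) ^ ((1 : ℝ) / m) = x := by
  rw [← Real.rpow_natCast x m, ← Real.rpow_mul hx, mul_one_div,
    div_self (by exact_mod_cast hm), Real.rpow_one]

lemma rpow_div_rpow_inv {x : ℝ} (hx : 0 ≤ x) {m n : ℕ} (hm : m ≠ 0) :
    (x ^ ((m : ℝ) / n)) ^ ((1 : ℝ) / m) = x ^ ((1 : ℝ) / n) := by
  rw [← Real.rpow_mul hx]
  congr 1
  field_simp

/-- Let `M` be a closed oriented `n`-manifold and `f : M → M` an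
`L`-Lipschitz map of degree `d > 0`.  If for some `1 ≤ k ≤ n−1` the induced map
`f^* : H^k(M;ℂ) → H^k(M;ℂ)` has an eigenvalue `λ` with `|λ| ≠ d^{k/n}`, then
`L > d^{1/n}`; more precisely either `|λ|^{1/k} ≤ L` and `|λ|^{1/k} > d^{1/n}`, or
`f^*` on `H^{n−k}(M;ℂ)` has an eigenvalue `μ` with `|μ| = d/|λ|`, `|μ|^{1/(n−k)} ≤ L`
and `|μ|^{1/(n−k)} > d^{1/n}`.

Here `V, W` model `H^k(M;ℂ)` and `H^{n−k}(M;ℂ)` with the minimal-comass norms, `T, S`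
the pullbacks `f^*`, `B` the (nondegenerate) Poincaré duality cup-product pairing into
`H^n(M;ℂ) ≅ ℂ`, under which `f^*` scales by the degree: `B(Tv, Sw) = d·B(v,w)`. -/
theorem stmt17 (M : Type*) [MetricSpace M] [CompactSpace M]
    (f : M → M) (L : NNReal) (hf : LipschitzWith L f)
    (n k : ℕ) (hn : 1 ≤ n) (hk1 : 1 ≤ k) (hk2 : k ≤ n - 1)
    (d : ℤ) (hd : 0 < d)
    (V W : Type*) [NormedAddCommGroup V] [NormedSpace ℂ V] [FiniteDimensional ℂ V]
    [NormedAddCommGroup W] [NormedSpace ℂ W] [FiniteDimensional ℂ W]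
    (T : V →ₗ[ℂ] V) (S : W →ₗ[ℂ] W)
    (hT : ∀ u : V, ‖T u‖ ≤ (L : ℝ) ^ k * ‖u‖)
    (hS : ∀ w : W, ‖S w‖ ≤ (L : ℝ) ^ (n - k) * ‖w‖)
    (B : V →ₗ[ℂ] W →ₗ[ℂ] ℂ)
    (hB₁ : ∀ v : V, (∀ w : W, B v w = 0) → v = 0)
    (hB₂ : ∀ w : W, (∀ v : V, B v w = 0) → w = 0)
    (hcompat : ∀ (v : V) (w : W), B (T v) (S w) = (d : ℂ) * B v w)
    (lam : ℂ) (hlam : Module.End.HasEigenvalue T lam)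
    (hne : ‖lam‖ ≠ (d : ℝ) ^ ((k : ℝ) / n)) :
    (d : ℝ) ^ ((1 : ℝ) / n) < (L : ℝ) ∧
      ((‖lam‖ ^ ((1 : ℝ) / k) ≤ (L : ℝ) ∧
          (d : ℝ) ^ ((1 : ℝ) / n) < ‖lam‖ ^ ((1 : ℝ) / k)) ∨
        ∃ mu : ℂ, Module.End.HasEigenvalue S mu ∧
          ‖mu‖ = (d : ℝ) / ‖lam‖ ∧
          ‖mu‖ ^ ((1 : ℝ) / (n - k)) ≤ (L : ℝ) ∧
          (d : ℝ) ^ ((1 : ℝ) / n) < ‖mu‖ ^ ((1 : ℝ) / (n - k))) := by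
  have hd0 : (0 : ℝ) < (d : ℝ) := by exact_mod_cast hd
  have hkn : k ≤ n := le_trans hk2 (Nat.sub_le n 1)
  have hk0 : (k : ℝ) ≠ 0 := by exact_mod_cast Nat.one_le_iff_ne_zero.mp hk1
  have hnk1 : 1 ≤ n - k := by omega
  have hnk0 : (n - k : ℕ) ≠ 0 := by omega
  have hL0 : (0 : ℝ) ≤ (L : ℝ) := L.coe_nonneg
  rcases lt_or_gt_of_ne hne with hlt | hgt
  · -- |λ| < d^{k/n} ; use the dual eigenvalue μ = d/λ
    -- first, λ ≠ 0
    obtain ⟨v, hv⟩ := hlam.exists_hasEigenvector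
    have hlam0 : lam ≠ 0 := by
      intro h0
      apply hv.right
      apply hB₁
      intro w
      have := hcompat v w
      rw [hv.apply_eq_smul, h0, zero_smul, map_zero, LinearMap.zero_apply] at this
      rw [eq_comm, mul_eq_zero] at this
      rcases this with h | h
      · exact absurd (by exact_mod_cast h : d = 0) hd.ne'
      · exact h
    set c : ℂ := (d : ℂ) / lam with hc
    -- key functional identity: B v (S w) = c * B v w
    have hkey : ∀ w : W, B v (S w) = c * B v w := by
      intro w
      have h1 := hcompat v w
      rw [hv.apply_eq_smul, map_smul, LinearMap.smul_apply, smul_eq_mul] at h1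
      rw [hc, div_mul_eq_mul_div, eq_div_iff hlam0]
      linear_combination h1
    -- S - c•id is not injective
    set g : W →ₗ[ℂ] W := S - c • (LinearMap.id : W →ₗ[ℂ] W) with hg
    have hgapp : ∀ w : W, g w = S w - c • w := by
      intro w
      simp [hg, LinearMap.sub_apply, LinearMap.smul_apply]
    have hnotinj : ¬ Function.Injective ⇑g := by
      intro hinj
      have hsurj := LinearMap.injective_iff_surjective.mp hinj
      apply hv.right
      apply hB₁
      intro w'
      obtain ⟨w, hw⟩ := hsurj w'
      rw [← hw, hgapp, map_sub, map_smul, smul_eq_mul, hkey w, sub_self]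
    obtain ⟨w, hw0, hSw⟩ : ∃ w : W, w ≠ 0 ∧ S w = c • w := by
      rw [Function.not_injective_iff] at hnotinj
      obtain ⟨a, b, hab, hne'⟩ := hnotinj
      refine ⟨a - b, sub_ne_zero.mpr hne', ?_⟩
      have h0 : g (a - b) = 0 := by rw [map_sub, hab, sub_self]
      rw [hgapp] at h0
      exact sub_eq_zero.mp h0
    have hmu : Module.End.HasEigenvalue S c :=
      Module.End.hasEigenvalue_of_hasEigenvector
        ⟨Module.End.mem_eigenspace_iff.mpr hSw, hw0⟩
    have habs : ‖c‖ = (d : ℝ) / ‖lam‖ := by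
      rw [hc, norm_div]
      congr 1
      rw [Complex.norm_intCast]
      exact abs_of_pos hd0
    have ha0 : 0 < ‖lam‖ := by
      simpa [norm_pos_iff] using hlam0
    -- |c| > d^{(n-k)/n}
    have hdiv : (d : ℝ) ^ (((n - k : ℕ) : ℝ) / n) < ‖c‖ := by
      rw [habs]
      have h1 : (d : ℝ) / (d : ℝ) ^ ((k : ℝ) / n) < (d : ℝ) / ‖lam‖ :=
        div_lt_div_of_pos_left hd0 ha0 hlt
      have h2 : (d : ℝ) ^ (((n - k : ℕ) : ℝ) / n) = (d : ℝ) / (d : ℝ) ^ ((k : ℝ) / n) := by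
        rw [eq_div_iff (ne_of_gt (Real.rpow_pos_of_pos hd0 _)), ← Real.rpow_add hd0]
        have hn0 : (n : ℝ) ≠ 0 := by exact_mod_cast Nat.one_le_iff_ne_zero.mp hn
        have : ((n - k : ℕ) : ℝ) = (n : ℝ) - (k : ℝ) := Nat.cast_sub hkn
        rw [this]
        field_simp
        rw [sub_add_cancel, div_self hn0, Real.rpow_one]
      rw [h2]; exact h1
    have hcle : ‖c‖ ≤ (L : ℝ) ^ (n - k) := eig_abs_le S hS hmu
    have hnkpos : (0 : ℝ) < ((n - k : ℕ) : ℝ) := by exact_mod_cast Nat.pos_of_ne_zero hnk0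
    have hle : ‖c‖ ^ ((1 : ℝ) / ((n - k : ℕ) : ℝ)) ≤ (L : ℝ) := by
      calc ‖c‖ ^ ((1 : ℝ) / ((n - k : ℕ) : ℝ))
          ≤ ((L : ℝ) ^ (n - k)) ^ ((1 : ℝ) / ((n - k : ℕ) : ℝ)) :=
            Real.rpow_le_rpow (norm_nonneg _) hcle (by positivity)
        _ = (L : ℝ) := pow_rpow_inv_nat hL0 hnk0
    have hgt' : (d : ℝ) ^ ((1 : ℝ) / n) < ‖c‖ ^ ((1 : ℝ) / ((n - k : ℕ) : ℝ)) := by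
      have h3 := Real.rpow_lt_rpow (Real.rpow_nonneg hd0.le _) hdiv
        (z := (1 : ℝ) / ((n - k : ℕ) : ℝ)) (by positivity)
      rwa [rpow_div_rpow_inv hd0.le hnk0] at h3
    refine ⟨lt_of_lt_of_le hgt' hle, Or.inr ⟨c, hmu, habs, ?_, ?_⟩⟩
    · simpa only [← Nat.cast_sub hkn] using hle
    · simpa only [← Nat.cast_sub hkn] using hgt'
  · -- |λ| > d^{k/n}
    have hle1 : ‖lam‖ ≤ (L : ℝ) ^ k := eig_abs_le T hT hlam
    have hle : ‖lam‖ ^ ((1 : ℝ) / k) ≤ (L : ℝ) := by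
      calc ‖lam‖ ^ ((1 : ℝ) / k)
          ≤ ((L : ℝ) ^ k) ^ ((1 : ℝ) / k) :=
            Real.rpow_le_rpow (norm_nonneg _) hle1 (by positivity)
        _ = (L : ℝ) := pow_rpow_inv_nat hL0 (by exact_mod_cast hk0)
    have hgt' : (d : ℝ) ^ ((1 : ℝ) / n) < ‖lam‖ ^ ((1 : ℝ) / k) := by
      have h3 := Real.rpow_lt_rpow (Real.rpow_nonneg hd0.le _) hgt
        (z := (1 : ℝ) / k) (by positivity)
      rwa [rpow_div_rpow_inv hd0.le (by exact_mod_cast hk0)] at h3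
    exact ⟨lt_of_lt_of_le hgt' hle, Or.inl ⟨hle, hgt'⟩⟩
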